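/- Let q ∈ ℂ with 0 < |q| < 1. The q-Airy function u(x) = Ai_q(x) satisfies the second-order q-difference equation u(q²x) + x·u(qx) − u(x) = 0 for all x ∈ ℂ. -/

import Mathlib

open scoped BigOperators

/-- The finite q-Pochhammer symbol `(a;q)_n`. -/
noncomputable def qPoch (q a : ℂ) (n : ℕ) : ℂ := ∏ j ∈ Finset.range n, (1 - a * q ^ j)

/-- The q-Airy function `Ai_q(x)`. -/
noncomputable def qAiry (q x : ℂ) : ℂ :=
  ∑' n : ℕ, (-1) ^ n * q ^ (n * (n - 1) / 2) * (-x) ^ n / (qPoch q (-q) n * qPoch q q n)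

/-- The general term of the q-Airy series. -/
noncomputable def qAiryTerm (q x : ℂ) (n : ℕ) : ℂ :=
  (-1) ^ n * q ^ (n * (n - 1) / 2) * (-x) ^ n / (qPoch q (-q) n * qPoch q q n)

lemma qAiry_eq_tsum (q x : ℂ) : qAiry q x = ∑' n : ℕ, qAiryTerm q x n := rfl

lemma tri (n : ℕ) : (n + 1) * ((n + 1) - 1) / 2 = n * (n - 1) / 2 + n := by
  cases n with
  | zero => norm_num
  | succ m =>
    obtain ⟨k, hk⟩ := Nat.even_mul_succ_self m
    simp only [Nat.add_sub_cancel]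
    have h1 : (m + 1 + 1) * (m + 1) = m * (m + 1) + 2 * (m + 1) := by ring
    have h2 : (m + 1) * m = m * (m + 1) := by ring
    rw [h1, h2]
    omega

lemma qPoch_ne_zero (q a : ℂ) (hq1 : ‖q‖ < 1)
    (ha : ‖a‖ ≤ ‖q‖) (n : ℕ) : qPoch q a n ≠ 0 := by
  rw [qPoch, Finset.prod_ne_zero_iff]
  intro j _
  rw [sub_ne_zero]
  intro h
  have h1 : ‖a * q ^ j‖ = 1 := by rw [← h]; simp
  have h2 : ‖a * q ^ j‖ < 1 := by
    rw [norm_mul, norm_pow]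
    calc ‖a‖ * ‖q‖ ^ j
        ≤ ‖q‖ * 1 := by
          apply mul_le_mul ha (pow_le_one₀ (norm_nonneg q) hq1.le)
            (pow_nonneg (norm_nonneg q) j) (norm_nonneg q)
      _ < 1 := by simpa using hq1
  rw [h1] at h2; exact lt_irrefl 1 h2

lemma one_add_pow_ne_zero (q : ℂ) (hq1 : ‖q‖ < 1) (n : ℕ) :
    (1 + q ^ (n + 1)) ≠ 0 := by
  intro h
  have h1 : q ^ (n + 1) = -1 := by linear_combination h
  have : ‖q ^ (n + 1)‖ < 1 :=
    by rw [norm_pow]; exact pow_lt_one₀ (norm_nonneg q) hq1 (Nat.succ_ne_zero n)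
  rw [h1] at this; simp at this

lemma one_sub_pow_ne_zero (q : ℂ) (hq1 : ‖q‖ < 1) (n : ℕ) :
    (1 - q ^ (n + 1)) ≠ 0 := by
  rw [sub_ne_zero]
  intro h
  have : ‖q ^ (n + 1)‖ < 1 :=
    by rw [norm_pow]; exact pow_lt_one₀ (norm_nonneg q) hq1 (Nat.succ_ne_zero n)
  rw [← h] at this; simp at this

/-- Ratio recursion for the q-Airy term. -/
lemma qAiryTerm_succ (q x : ℂ) (hq1 : ‖q‖ < 1) (n : ℕ) :
    qAiryTerm q x (n + 1) =
      qAiryTerm q x n * (q ^ n * x / ((1 + q ^ (n + 1)) * (1 - q ^ (n + 1)))) := by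
  have hD1 : qPoch q (-q) n ≠ 0 := qPoch_ne_zero q (-q) hq1 (by simp) n
  have hD2 : qPoch q q n ≠ 0 := qPoch_ne_zero q q hq1 le_rfl n
  have h1 : (1 : ℂ) + q ^ (n + 1) ≠ 0 := one_add_pow_ne_zero q hq1 n
  have h2 : (1 : ℂ) - q ^ (n + 1) ≠ 0 := one_sub_pow_ne_zero q hq1 n
  have e1 : qPoch q (-q) (n + 1) = qPoch q (-q) n * (1 + q ^ (n + 1)) := by
    rw [qPoch, Finset.prod_range_succ, ← qPoch]; ring_nf
  have e2 : qPoch q q (n + 1) = qPoch q q n * (1 - q ^ (n + 1)) := by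
    rw [qPoch, Finset.prod_range_succ, ← qPoch]; ring_nf
  rw [qAiryTerm, qAiryTerm, e1, e2, tri, pow_add]
  field_simp
  ring

/-- Scaling of the q-Airy term. -/
lemma qAiryTerm_scale (q c x : ℂ) (n : ℕ) :
    qAiryTerm q (c * x) n = c ^ n * qAiryTerm q x n := by
  rw [qAiryTerm, qAiryTerm, show -(c * x) = c * -x by ring, mul_pow]
  ring

lemma qAiryTerm_zero (q x : ℂ) : qAiryTerm q x 0 = 1 := by
  simp [qAiryTerm, qPoch]

lemma summable_qAiryTerm (q x : ℂ) (hq1 : ‖q‖ < 1) :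
    Summable (qAiryTerm q x) := by
  have hq : ‖q‖ < 1 := by exact hq1
  have h0 : Filter.Tendsto (fun n : ℕ => q ^ n) Filter.atTop (nhds 0) :=
    tendsto_pow_atTop_nhds_zero_of_norm_lt_one hq
  have hnum : Filter.Tendsto (fun n : ℕ => q ^ n * x) Filter.atTop (nhds 0) := by
    simpa using h0.mul_const x
  have hshift : Filter.Tendsto (fun n : ℕ => q ^ (n + 1)) Filter.atTop (nhds 0) :=
    h0.comp (Filter.tendsto_add_atTop_nat 1)
  have hden : Filter.Tendsto (fun n : ℕ => (1 + q ^ (n + 1)) * (1 - q ^ (n + 1)))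
      Filter.atTop (nhds 1) := by
    have hA : Filter.Tendsto (fun n : ℕ => (1 : ℂ) + q ^ (n + 1)) Filter.atTop
        (nhds (1 + 0)) := tendsto_const_nhds.add hshift
    have hB : Filter.Tendsto (fun n : ℕ => (1 : ℂ) - q ^ (n + 1)) Filter.atTop
        (nhds (1 - 0)) := tendsto_const_nhds.sub hshift
    have := hA.mul hB
    simpa using this
  have hr : Filter.Tendsto
      (fun n : ℕ => ‖q ^ n * x / ((1 + q ^ (n + 1)) * (1 - q ^ (n + 1)))‖)
      Filter.atTop (nhds 0) := by
    have := (hnum.div hden one_ne_zero).norm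
    simpa using this
  have hev : ∀ᶠ n in Filter.atTop,
      ‖q ^ n * x / ((1 + q ^ (n + 1)) * (1 - q ^ (n + 1)))‖ < 1 / 2 :=
    hr.eventually_lt_const (by norm_num)
  apply summable_of_ratio_norm_eventually_le (r := 1 / 2) (by norm_num)
  filter_upwards [hev] with n hn
  rw [qAiryTerm_succ q x hq1 n, norm_mul]
  calc ‖qAiryTerm q x n‖ * ‖q ^ n * x / ((1 + q ^ (n + 1)) * (1 - q ^ (n + 1)))‖
      ≤ ‖qAiryTerm q x n‖ * (1 / 2) :=
        mul_le_mul_of_nonneg_left hn.le (norm_nonneg _)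
    _ = 1 / 2 * ‖qAiryTerm q x n‖ := by ring

theorem qAiry_qDifference_equation (q : ℂ) (hq0 : 0 < ‖q‖)
    (hq1 : ‖q‖ < 1) (x : ℂ) :
    qAiry q (q ^ 2 * x) + x * qAiry q (q * x) - qAiry q x = 0 := by
  have hs0 : Summable (qAiryTerm q x) := summable_qAiryTerm q x hq1
  have hs1 : Summable (qAiryTerm q (q * x)) := summable_qAiryTerm q (q * x) hq1
  have hs2 : Summable (qAiryTerm q (q ^ 2 * x)) := summable_qAiryTerm q (q ^ 2 * x) hq1
  have h1 : (1 : ℂ) + q ^ (0 + 1) ≠ 0 := one_add_pow_ne_zero q hq1 0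
  -- the key termwise recurrence
  have key : ∀ n : ℕ, qAiryTerm q (q ^ 2 * x) (n + 1) - qAiryTerm q x (n + 1)
      = -(x * qAiryTerm q (q * x) n) := by
    intro n
    have hA : (1 : ℂ) + q ^ (n + 1) ≠ 0 := one_add_pow_ne_zero q hq1 n
    have hB : (1 : ℂ) - q ^ (n + 1) ≠ 0 := one_sub_pow_ne_zero q hq1 n
    rw [qAiryTerm_scale q (q ^ 2) x (n + 1), qAiryTerm_scale q q x n,
      qAiryTerm_succ q x hq1 n]
    have hpow : (q ^ 2) ^ (n + 1) = q ^ (n + 1) * q ^ (n + 1) := by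
      rw [← pow_add, ← pow_mul]; ring_nf
    rw [hpow]
    field_simp
    ring
  have hg : Summable (fun n => qAiryTerm q (q ^ 2 * x) n - qAiryTerm q x n) :=
    hs2.sub hs0
  have e1 : (∑' n : ℕ, (qAiryTerm q (q ^ 2 * x) n - qAiryTerm q x n))
      = qAiry q (q ^ 2 * x) - qAiry q x := by
    rw [qAiry_eq_tsum, qAiry_eq_tsum]
    exact hs2.tsum_sub hs0
  have e2 : (∑' n : ℕ, (qAiryTerm q (q ^ 2 * x) n - qAiryTerm q x n))
      = -(x * qAiry q (q * x)) := by
    rw [hg.tsum_eq_zero_add]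
    simp only [qAiryTerm_zero, sub_self, zero_add]
    calc (∑' n : ℕ, (qAiryTerm q (q ^ 2 * x) (n + 1) - qAiryTerm q x (n + 1)))
        = ∑' n : ℕ, -(x * qAiryTerm q (q * x) n) := by
          exact tsum_congr key
      _ = -(x * ∑' n : ℕ, qAiryTerm q (q * x) n) := by
          rw [tsum_neg, tsum_mul_left]
      _ = -(x * qAiry q (q * x)) := by rw [qAiry_eq_tsum]
  have := e1.symm.trans e2
  linear_combination this
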